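/- Let T be a self-adjoint contraction on a Hilbert space K, and let U be a unitary on a Hilbert space L ⊇ K that is a strong dilation of T, i.e., P U^k |_K = T^k for all k ≥ 0, where P is the orthogonal projection of L onto K. Let K_n be the closed span of ∪_{l≥n} U^l(K) and P_n the orthogonal projection onto K_n. Then P P_n P = T^{2n} (as operators on K) for all n ≥ 0. -/

import Mathlib

local notation "⟪" x ", " y "⟫" => @inner ℂ _ _ x y


/-- If `U` is a unitary strong dilation of the self-adjoint contraction `T`
(`P U^k |_K = T^k` for all `k ≥ 0`), and `P_n` is the orthogonal projection onto the closed
span `K_n` of `∪_{l ≥ n} U^l(K)`, then `P P_n P = T^{2n}` as operators on `K`. -/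
theorem stmt10 {L : Type*} [NormedAddCommGroup L] [InnerProductSpace ℂ L] [CompleteSpace L]
    (K : Submodule ℂ L) [CompleteSpace K]
    (T : K →L[ℂ] K) (hsa : IsSelfAdjoint T) (hcontr : ‖T‖ ≤ 1)
    (U : L ≃ₗᵢ[ℂ] L)
    (hdil : ∀ (k : ℕ) (x : K), K.orthogonalProjectionOnto ((U ^ k) (x : L)) = (T ^ k) x)
    (n : ℕ) (Kn : Submodule ℂ L)
    (hKn : Kn = (⨆ l ∈ Set.Ici n,
      Submodule.map ((U ^ l : L ≃ₗᵢ[ℂ] L) : L →ₗ[ℂ] L) K).topologicalClosure)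
    [CompleteSpace Kn] :
    ∀ x : K, K.orthogonalProjectionOnto ((Kn.orthogonalProjectionOnto (x : L) : L))
      = (T ^ (2 * n)) x := by
  have hsym : (T : K →ₗ[ℂ] K).IsSymmetric :=
    ContinuousLinearMap.isSelfAdjoint_iff_isSymmetric.mp hsa
  have hTpow : ∀ (k : ℕ) (y : K), ((T : K →ₗ[ℂ] K) ^ k) y = (T ^ k) y := by
    intro k
    induction k with
    | zero => intro y; rfl
    | succ k ih =>
        intro y
        rw [pow_succ, pow_succ, Module.End.mul_apply, ContinuousLinearMap.mul_apply, ih]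
        rfl
  intro x
  set v : L := (U ^ n) ((T ^ n) x : L) with hv
  -- Step 1 : orthogonalProjection Kn x = v
  have hmem : v ∈ Kn := by
    rw [hKn]
    apply Submodule.le_topologicalClosure
    refine (le_iSup₂ (f := fun l (_ : l ∈ Set.Ici n) =>
      Submodule.map ((U ^ l : L ≃ₗᵢ[ℂ] L) : L →ₗ[ℂ] L) K) n (le_refl n)) ?_
    exact ⟨((T ^ n) x : L), Submodule.coe_mem _, rfl⟩
  have horth : ∀ w ∈ Kn, inner ℂ ((x : L) - v) w = (0 : ℂ) := by
    intro w hw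
    rw [hKn] at hw
    -- the kernel of the continuous functional ⟪x - v, ·⟫ is a closed submodule
    set f : L →L[ℂ] ℂ := innerSL ℂ ((x : L) - v) with hf
    have hker : (⨆ l ∈ Set.Ici n,
        Submodule.map ((U ^ l : L ≃ₗᵢ[ℂ] L) : L →ₗ[ℂ] L) K).topologicalClosure
        ≤ LinearMap.ker (f : L →ₗ[ℂ] ℂ) := by
      refine Submodule.topologicalClosure_minimal _ ?_ (ContinuousLinearMap.isClosed_ker f)
      · refine iSup₂_le fun l hl => ?_
        rintro _ ⟨z, hz, rfl⟩
        obtain ⟨m, rfl⟩ := le_iff_exists_add.mp (Set.mem_Ici.mp hl)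
        rw [LinearMap.mem_ker]
        have hz' : ((⟨z, hz⟩ : K) : L) = z := rfl
        have h1 : ⟪(x : L), (U ^ (n + m)) z⟫ = ⟪x, (T ^ (n + m)) ⟨z, hz⟩⟫ := by
          calc ⟪(x : L), (U ^ (n + m)) z⟫
              = ⟪((K.orthogonalProjectionOnto (x : L)) : L), (U ^ (n + m)) z⟫ := by
                rw [← Submodule.starProjection_apply, Submodule.starProjection_eq_self_iff.mpr x.2]
            _ = ⟪(x : L), ((K.orthogonalProjectionOnto ((U ^ (n + m)) z)) : L)⟫ :=
                by simpa only [Submodule.starProjection_apply] using Submodule.inner_starProjection_left_eq_right K _ _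
            _ = ⟪(x : L), (((T ^ (n + m)) ⟨z, hz⟩ : K) : L)⟫ := by
                exact congrArg (fun t : K => (⟪(x : L), (t : L)⟫ : ℂ)) (hdil (n + m) ⟨z, hz⟩)
            _ = ⟪x, (T ^ (n + m)) ⟨z, hz⟩⟫ := rfl
        have h2 : ⟪v, (U ^ (n + m)) z⟫ = ⟪x, (T ^ (n + m)) ⟨z, hz⟩⟫ := by
          have hUsplit : (U ^ (n + m)) z = (U ^ n) ((U ^ m) z) := by
            rw [pow_add]; rfl
          calc ⟪v, (U ^ (n + m)) z⟫
              = ⟪(U ^ n) (((T ^ n) x : K) : L), (U ^ n) ((U ^ m) z)⟫ := by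
                rw [hv, hUsplit]
            _ = ⟪(((T ^ n) x : K) : L), (U ^ m) z⟫ :=
                LinearIsometryEquiv.inner_map_map _ _ _
            _ = ⟪((K.orthogonalProjectionOnto (((T ^ n) x : K) : L)) : L), (U ^ m) z⟫ := by
                rw [← Submodule.starProjection_apply, Submodule.starProjection_eq_self_iff.mpr ((T ^ n) x).2]
            _ = ⟪(((T ^ n) x : K) : L), ((K.orthogonalProjectionOnto ((U ^ m) z)) : L)⟫ :=
                by simpa only [Submodule.starProjection_apply] using Submodule.inner_starProjection_left_eq_right K _ _
            _ = ⟪(((T ^ n) x : K) : L), (((T ^ m) ⟨z, hz⟩ : K) : L)⟫ := by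
                exact congrArg (fun t : K => (⟪(((T ^ n) x : K) : L), (t : L)⟫ : ℂ))
                  (hdil m ⟨z, hz⟩)
            _ = ⟪(T ^ n) x, (T ^ m) ⟨z, hz⟩⟫ := rfl
            _ = ⟪x, (T ^ n) ((T ^ m) ⟨z, hz⟩)⟫ := by
                have h := (hsym.pow n) x ((T ^ m) ⟨z, hz⟩)
                rw [hTpow n x, hTpow n ((T ^ m) ⟨z, hz⟩)] at h
                exact h
            _ = ⟪x, (T ^ (n + m)) ⟨z, hz⟩⟫ := by
                rw [pow_add]; rfl
        show (⟪(x : L) - v, (U ^ (n + m)) z⟫ : ℂ) = 0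
        rw [inner_sub_left, h1, h2, sub_self]
    have := hker hw
    rw [LinearMap.mem_ker] at this
    rw [inner_sub_left]
    simpa [hf] using this
  have hproj : ((Kn.orthogonalProjectionOnto (x : L)) : L) = v := by
    rw [← Submodule.starProjection_apply]; exact Submodule.eq_starProjection_of_mem_of_inner_eq_zero hmem horth
  -- Step 2 : project back down to K
  rw [hproj, hv, hdil n ((T ^ n) x)]
  have : (T ^ n) ((T ^ n) x) = (T ^ (2 * n)) x := by
    rw [two_mul, pow_add]; rfl
  rw [this]
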